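/- Let H be a simple graph with density m(H) ≥ 1, and let H^(b) be the multigraph obtained from H by replacing each edge with b parallel copies, for a positive integer b. Then the edge set of H^(b) can be partitioned into k = ⌈b·m(H)⌉ parts H₁, …, H_k such that for each i, every connected component of H_i is a simple graph containing at most one cycle. -/

import Mathlib

/-- The number of edges of `G` spanned by a vertex set `s`. -/
noncomputable def edgeCountIn {V : Type*} (G : SimpleGraph V) (s : Set V) : ℕ :=
  {e ∈ G.edgeSet | ∀ v ∈ e, v ∈ s}.ncard

/-- Matroid decomposition lemma: if `H` is a simple graph of density exactly `d ≥ 1`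
(`d = m(H)`), then the multigraph `H^{(b)}` obtained by duplicating every edge `b` times
can be partitioned into `k = ⌈b·d⌉` parts (a part is a fiber of `f`), each of which is a
simple graph all of whose connected components are unicyclic (equivalently, every vertex
set `s` spans at most `|s|` edges of the part). -/


theorem konig_regular {A L R : Type*} [Fintype A] [Fintype L] [Fintype R]
    [DecidableEq A] [DecidableEq L] [DecidableEq R]
    (l : A → L) (r : A → R) :
    ∀ (k : ℕ) (B : Finset A),
      (∀ x : L, (B.filter fun p => l p = x).card = k) →
      (∀ y : R, (B.filter fun p => r p = y).card = k) →
      ∃ f : A → ℕ, (∀ p ∈ B, f p < k) ∧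
        (∀ p ∈ B, ∀ q ∈ B, l p = l q → f p = f q → p = q) ∧
        (∀ p ∈ B, ∀ q ∈ B, r p = r q → f p = f q → p = q) := by
  intro k
  induction k with
  | zero =>
    intro B hl _
    have hB : B = ∅ := by
      rw [Finset.eq_empty_iff_forall_notMem]
      intro p hp
      have h1 := hl (l p)
      have hpmem : p ∈ B.filter fun q => l q = l p := by simp [hp]
      rw [Finset.card_eq_zero] at h1
      rw [h1] at hpmem
      simp at hpmem
    subst hB
    exact ⟨fun _ => 0, by simp, by simp, by simp⟩
  | succ k ih =>
    intro B hl hr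
    set t : L → Finset R := fun x => (B.filter fun p => l p = x).image r with ht
    have hall : ∀ S : Finset L, S.card ≤ (S.biUnion t).card := by
      intro S
      set D : Finset A := S.biUnion (fun x => B.filter fun p => l p = x) with hD
      have hDB : D ⊆ B := by
        rw [hD]
        exact Finset.biUnion_subset.2 fun x _ => Finset.filter_subset _ _
      have hDcard : D.card = (k+1) * S.card := by
        rw [hD, Finset.card_biUnion]
        · rw [Finset.sum_congr rfl fun x _ => hl x]
          simp [mul_comm]
        · intro x _ y _ hxy
          rw [Function.onFun, Finset.disjoint_left]
          intro p hp hq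
          simp only [Finset.mem_filter] at hp hq
          exact hxy (hp.2 ▸ hq.2 ▸ rfl)
      have hDim : D.image r ⊆ S.biUnion t := by
        intro y hy
        rw [Finset.mem_image] at hy
        obtain ⟨p, hp, rfl⟩ := hy
        rw [hD, Finset.mem_biUnion] at hp
        obtain ⟨x, hx, hpx⟩ := hp
        rw [Finset.mem_biUnion]
        exact ⟨x, hx, Finset.mem_image_of_mem r hpx⟩
      have hDle : D.card ≤ (k+1) * (D.image r).card := by
        apply Finset.card_le_mul_card_image
        intro y _
        calc (D.filter fun p => r p = y).card
            ≤ (B.filter fun p => r p = y).card :=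
              Finset.card_le_card (Finset.filter_subset_filter _ hDB)
          _ = k + 1 := hr y
      have := hDle.trans (Nat.mul_le_mul_left _ (Finset.card_le_card hDim))
      rw [hDcard] at this
      exact Nat.le_of_mul_le_mul_left this (Nat.succ_pos k)
    obtain ⟨ρ, hρinj, hρmem⟩ := (Finset.all_card_le_biUnion_card_iff_exists_injective t).1 hall
    have hwit : ∀ x : L, ∃ p, p ∈ B ∧ l p = x ∧ r p = ρ x := by
      intro x
      have := hρmem x
      rw [ht] at this
      simp only [Finset.mem_image, Finset.mem_filter] at this
      obtain ⟨p, ⟨hpB, hpl⟩, hpr⟩ := this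
      exact ⟨p, hpB, hpl, hpr⟩
    choose a haB hal har using hwit
    -- cardinalities of L and R agree
    have hcardL : B.card = (k+1) * Fintype.card L := by
      rw [Finset.card_eq_sum_card_fiberwise (fun p _ => Finset.mem_univ (l p))]
      rw [Finset.sum_congr rfl fun x _ => hl x, Finset.sum_const, smul_eq_mul,
        Finset.card_univ, mul_comm]
    have hcardR : B.card = (k+1) * Fintype.card R := by
      rw [Finset.card_eq_sum_card_fiberwise (fun p _ => Finset.mem_univ (r p))]
      rw [Finset.sum_congr rfl fun y _ => hr y, Finset.sum_const, smul_eq_mul,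
        Finset.card_univ, mul_comm]
    have hLR : Fintype.card L = Fintype.card R :=
      Nat.eq_of_mul_eq_mul_left (Nat.succ_pos k) (hcardL ▸ hcardR)
    have hρbij : Function.Bijective ρ :=
      (Fintype.bijective_iff_injective_and_card ρ).2 ⟨hρinj, hLR⟩
    set ρE : L ≃ R := Equiv.ofBijective ρ hρbij with hρE
    set M : Finset A := Finset.univ.image a with hM
    have hainj : Function.Injective a := by
      intro x y hxy
      have := hal x
      rw [hxy, hal y] at this
      exact this.symm
    have hMmem : ∀ p, p ∈ M ↔ ∃ x, a x = p := by
      intro p; simp [hM]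
    have hMl : ∀ x : L, (M.filter fun p => l p = x) = {a x} := by
      intro x
      ext p
      simp only [Finset.mem_filter, Finset.mem_singleton, hMmem p]
      constructor
      · rintro ⟨⟨x', rfl⟩, hlp⟩
        rw [hal x'] at hlp
        rw [hlp]
      · rintro rfl
        exact ⟨⟨x, rfl⟩, hal x⟩
    have hMr : ∀ y : R, (M.filter fun p => r p = y) = {a (ρE.symm y)} := by
      intro y
      ext p
      simp only [Finset.mem_filter, Finset.mem_singleton, hMmem p]
      constructor
      · rintro ⟨⟨x', rfl⟩, hrp⟩
        rw [har x'] at hrp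
        have : ρE x' = y := hrp
        rw [← this, Equiv.symm_apply_apply]
      · rintro rfl
        refine ⟨⟨_, rfl⟩, ?_⟩
        rw [har]
        exact ρE.apply_symm_apply y
    set B' : Finset A := B \ M with hB'
    have hfilt : ∀ (P : A → Prop) [DecidablePred P],
        B'.filter P = (B.filter P) \ (M.filter P) := by
      intro P _
      ext p
      simp only [hB', Finset.mem_sdiff, Finset.mem_filter]
      tauto
    have hl' : ∀ x : L, (B'.filter fun p => l p = x).card = k := by
      intro x
      rw [hfilt, hMl x]
      rw [Finset.card_sdiff_of_subset]
      · rw [hl x]; simp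
      · intro p hp
        rw [Finset.mem_singleton] at hp
        subst hp
        exact Finset.mem_filter.2 ⟨haB x, hal x⟩
    have hr' : ∀ y : R, (B'.filter fun p => r p = y).card = k := by
      intro y
      rw [hfilt, hMr y]
      rw [Finset.card_sdiff_of_subset]
      · rw [hr y]; simp
      · intro p hp
        rw [Finset.mem_singleton] at hp
        subst hp
        refine Finset.mem_filter.2 ⟨haB _, ?_⟩
        rw [har]
        exact ρE.apply_symm_apply y
    obtain ⟨f', hflt', hfl', hfr'⟩ := ih B' hl' hr'
    refine ⟨fun p => if p ∈ M then k else f' p, ?_, ?_, ?_⟩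
    · intro p hp
      by_cases hpM : p ∈ M
      · simp [hpM]
      · simp only [hpM, if_false]
        exact Nat.lt_succ_of_lt (hflt' p (Finset.mem_sdiff.2 ⟨hp, hpM⟩))
    · intro p hp q hq hlpq hf
      by_cases hpM : p ∈ M <;> by_cases hqM : q ∈ M
      · obtain ⟨x, rfl⟩ := (hMmem p).1 hpM
        obtain ⟨y, rfl⟩ := (hMmem q).1 hqM
        rw [hal, hal] at hlpq
        rw [hlpq]
      · exfalso
        simp only [hpM, hqM, if_true, if_false] at hf
        exact absurd hf.symm (Nat.ne_of_lt (hflt' q (Finset.mem_sdiff.2 ⟨hq, hqM⟩)))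
      · exfalso
        simp only [hpM, hqM, if_true, if_false] at hf
        exact absurd hf (Nat.ne_of_lt (hflt' p (Finset.mem_sdiff.2 ⟨hp, hpM⟩)))
      · simp only [hpM, hqM, if_false] at hf
        exact hfl' p (Finset.mem_sdiff.2 ⟨hp, hpM⟩) q (Finset.mem_sdiff.2 ⟨hq, hqM⟩) hlpq hf
    · intro p hp q hq hrpq hf
      by_cases hpM : p ∈ M <;> by_cases hqM : q ∈ M
      · obtain ⟨x, rfl⟩ := (hMmem p).1 hpM
        obtain ⟨y, rfl⟩ := (hMmem q).1 hqM
        rw [har, har] at hrpq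
        rw [hρinj hrpq]
      · exfalso
        simp only [hpM, hqM, if_true, if_false] at hf
        exact absurd hf.symm (Nat.ne_of_lt (hflt' q (Finset.mem_sdiff.2 ⟨hq, hqM⟩)))
      · exfalso
        simp only [hpM, hqM, if_true, if_false] at hf
        exact absurd hf (Nat.ne_of_lt (hflt' p (Finset.mem_sdiff.2 ⟨hp, hpM⟩)))
      · simp only [hpM, hqM, if_false] at hf
        exact hfr' p (Finset.mem_sdiff.2 ⟨hp, hpM⟩) q (Finset.mem_sdiff.2 ⟨hq, hqM⟩) hrpq hf

theorem sigma_fiber_card {L : Type*} [Fintype L] [DecidableEq L] (g : L → ℕ) (x : L) :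
    Fintype.card {p : Σ x' : L, Fin (g x') // p.1 = x} = g x := by
  have e : {p : Σ x' : L, Fin (g x') // p.1 = x} ≃ Fin (g x) := by
    refine ⟨fun p => Fin.cast (congrArg g p.2) p.1.2, fun j => ⟨⟨x, j⟩, rfl⟩, ?_, ?_⟩
    · rintro ⟨⟨x', j⟩, rfl⟩; rfl
    · intro j; rfl
  rw [Fintype.card_congr e, Fintype.card_fin]

theorem fibcard {A σ : Type*} [Fintype A] [DecidableEq σ] (m : A → σ) (x : σ) :
    Fintype.card {a : A // m a = x} = (Finset.univ.filter fun p => m p = x).card := by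
  classical
  rw [Fintype.card_subtype]

theorem konig_sub {A L R : Type*} [Fintype A] [Fintype L] [Fintype R]
    [DecidableEq A] [DecidableEq L] [DecidableEq R]
    (l : A → L) (r : A → R) (k : ℕ)
    (hl : ∀ x, (Finset.univ.filter fun p => l p = x).card ≤ k)
    (hr : ∀ y, (Finset.univ.filter fun p => r p = y).card ≤ k) :
    ∃ f : A → ℕ, (∀ p, f p < k) ∧
      (∀ p q, l p = l q → f p = f q → p = q) ∧
      (∀ p q, r p = r q → f p = f q → p = q) := by
  classical
  set cl : L → ℕ := fun x => (Finset.univ.filter fun p => l p = x).card with hcl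
  set cr : R → ℕ := fun y => (Finset.univ.filter fun p => r p = y).card with hcr
  set PL := Σ x : L, Fin (k - cl x)
  set PR := Σ y : R, Fin (k - cr y)
  set A2 := (A ⊕ A) ⊕ (PL ⊕ PR) with hA2
  set l2 : A2 → L ⊕ R := fun p => match p with
    | .inl (.inl a) => .inl (l a)
    | .inl (.inr a) => .inr (r a)
    | .inr (.inl q) => .inl q.1
    | .inr (.inr q) => .inr q.1
  set r2 : A2 → R ⊕ L := fun p => match p with
    | .inl (.inl a) => .inl (r a)
    | .inl (.inr a) => .inr (l a)
    | .inr (.inl q) => .inr q.1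
    | .inr (.inr q) => .inl q.1
  have cardsplit : ∀ (P : A2 → Prop) [DecidablePred P],
      (Finset.univ.filter P).card =
        Fintype.card {a : A // P (.inl (.inl a))} + Fintype.card {a : A // P (.inl (.inr a))}
        + (Fintype.card {q : PL // P (.inr (.inl q))}
          + Fintype.card {q : PR // P (.inr (.inr q))}) := by
    intro P _
    rw [← Fintype.card_subtype]
    rw [Fintype.card_congr (Equiv.subtypeSum), Fintype.card_sum,
      Fintype.card_congr (Equiv.subtypeSum (p := fun c => P (.inl c))), Fintype.card_sum,
      Fintype.card_congr (Equiv.subtypeSum (p := fun c => P (.inr c))), Fintype.card_sum]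
  have hl2 : ∀ x : L ⊕ R, (Finset.univ.filter fun p => l2 p = x).card = k := by
    intro x
    rw [cardsplit]
    cases x with
    | inl x =>
      have h1 : Fintype.card {a : A // l2 (.inl (.inl a)) = Sum.inl x} = cl x := by
        rw [Fintype.card_congr (Equiv.subtypeEquivRight (fun a => by
          show Sum.inl (l a) = Sum.inl x ↔ l a = x
          simp))]
        exact fibcard l x
      have h2 : Fintype.card {a : A // l2 (.inl (.inr a)) = Sum.inl x} = 0 := by
        rw [Fintype.card_eq_zero_iff]
        constructor; rintro ⟨a, ha⟩; simp [l2] at ha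
      have h3 : Fintype.card {q : PL // l2 (.inr (.inl q)) = Sum.inl x} = k - cl x := by
        rw [Fintype.card_congr (Equiv.subtypeEquivRight (fun q => by
          show Sum.inl q.1 = Sum.inl x ↔ q.1 = x
          simp))]
        exact sigma_fiber_card _ x
      have h4 : Fintype.card {q : PR // l2 (.inr (.inr q)) = Sum.inl x} = 0 := by
        rw [Fintype.card_eq_zero_iff]
        constructor; rintro ⟨q, hq⟩; simp [l2] at hq
      have hx : cl x ≤ k := hl x
      rw [h1, h2, h3, h4]
      omega
    | inr y =>
      have h1 : Fintype.card {a : A // l2 (.inl (.inl a)) = Sum.inr y} = 0 := by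
        rw [Fintype.card_eq_zero_iff]
        constructor; rintro ⟨a, ha⟩; simp [l2] at ha
      have h2 : Fintype.card {a : A // l2 (.inl (.inr a)) = Sum.inr y} = cr y := by
        rw [Fintype.card_congr (Equiv.subtypeEquivRight (fun a => by
          show Sum.inr (r a) = Sum.inr y ↔ r a = y
          simp))]
        exact fibcard r y
      have h3 : Fintype.card {q : PL // l2 (.inr (.inl q)) = Sum.inr y} = 0 := by
        rw [Fintype.card_eq_zero_iff]
        constructor; rintro ⟨q, hq⟩; simp [l2] at hq
      have h4 : Fintype.card {q : PR // l2 (.inr (.inr q)) = Sum.inr y} = k - cr y := by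
        rw [Fintype.card_congr (Equiv.subtypeEquivRight (fun q => by
          show Sum.inr q.1 = Sum.inr y ↔ q.1 = y
          simp))]
        exact sigma_fiber_card _ y
      have hy : cr y ≤ k := hr y
      rw [h1, h2, h3, h4]
      omega
  have hr2 : ∀ y : R ⊕ L, (Finset.univ.filter fun p => r2 p = y).card = k := by
    intro y
    rw [cardsplit]
    cases y with
    | inl y =>
      have h1 : Fintype.card {a : A // r2 (.inl (.inl a)) = Sum.inl y} = cr y := by
        rw [Fintype.card_congr (Equiv.subtypeEquivRight (fun a => by
          show Sum.inl (r a) = Sum.inl y ↔ r a = y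
          simp))]
        exact fibcard r y
      have h2 : Fintype.card {a : A // r2 (.inl (.inr a)) = Sum.inl y} = 0 := by
        rw [Fintype.card_eq_zero_iff]
        constructor; rintro ⟨a, ha⟩; simp [r2] at ha
      have h3 : Fintype.card {q : PL // r2 (.inr (.inl q)) = Sum.inl y} = 0 := by
        rw [Fintype.card_eq_zero_iff]
        constructor; rintro ⟨q, hq⟩; simp [r2] at hq
      have h4 : Fintype.card {q : PR // r2 (.inr (.inr q)) = Sum.inl y} = k - cr y := by
        rw [Fintype.card_congr (Equiv.subtypeEquivRight (fun q => by
          show Sum.inl q.1 = Sum.inl y ↔ q.1 = y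
          simp))]
        exact sigma_fiber_card _ y
      have hy : cr y ≤ k := hr y
      rw [h1, h2, h3, h4]
      omega
    | inr x =>
      have h1 : Fintype.card {a : A // r2 (.inl (.inl a)) = Sum.inr x} = 0 := by
        rw [Fintype.card_eq_zero_iff]
        constructor; rintro ⟨a, ha⟩; simp [r2] at ha
      have h2 : Fintype.card {a : A // r2 (.inl (.inr a)) = Sum.inr x} = cl x := by
        rw [Fintype.card_congr (Equiv.subtypeEquivRight (fun a => by
          show Sum.inr (l a) = Sum.inr x ↔ l a = x
          simp))]
        exact fibcard l x
      have h3 : Fintype.card {q : PL // r2 (.inr (.inl q)) = Sum.inr x} = k - cl x := by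
        rw [Fintype.card_congr (Equiv.subtypeEquivRight (fun q => by
          show Sum.inr q.1 = Sum.inr x ↔ q.1 = x
          simp))]
        exact sigma_fiber_card _ x
      have h4 : Fintype.card {q : PR // r2 (.inr (.inr q)) = Sum.inr x} = 0 := by
        rw [Fintype.card_eq_zero_iff]
        constructor; rintro ⟨q, hq⟩; simp [r2] at hq
      have hx : cl x ≤ k := hl x
      rw [h1, h2, h3, h4]
      omega
  obtain ⟨F, hFlt, hFl, hFr⟩ := konig_regular l2 r2 k Finset.univ
    (fun x => hl2 x) (fun y => hr2 y)
  refine ⟨fun a => F (.inl (.inl a)), ?_, ?_, ?_⟩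
  · intro p
    exact hFlt _ (Finset.mem_univ _)
  · intro p q hpq hf
    have : (Sum.inl (Sum.inl p) : A2) = Sum.inl (Sum.inl q) := by
      apply hFl _ (Finset.mem_univ _) _ (Finset.mem_univ _) _ hf
      show Sum.inl (l p) = Sum.inl (l q)
      rw [hpq]
    simpa using this
  · intro p q hpq hf
    have : (Sum.inl (Sum.inl p) : A2) = Sum.inl (Sum.inl q) := by
      apply hFr _ (Finset.mem_univ _) _ (Finset.mem_univ _) _ hf
      show Sum.inl (r p) = Sum.inl (r q)
      rw [hpq]
    simpa using this

set_option maxHeartbeats 2000000 in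
theorem matroid_decomposition {V : Type*} [Fintype V] (H : SimpleGraph V)
    (b : ℕ) (hb : 0 < b) (d : ℚ) (hd1 : 1 ≤ d)
    (hub : ∀ s : Set V, s.Nonempty → (edgeCountIn H s : ℚ) ≤ d * s.ncard)
    (hmax : ∃ s : Set V, s.Nonempty ∧ (edgeCountIn H s : ℚ) = d * s.ncard) :
    ∃ f : H.edgeSet × Fin b → Fin ⌈(b : ℚ) * d⌉₊,
      (∀ (e : H.edgeSet) (c c' : Fin b), f (e, c) = f (e, c') → c = c') ∧
      (∀ (i : Fin ⌈(b : ℚ) * d⌉₊) (s : Set V), s.Nonempty →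
        ({e : Sym2 V | (∃ p : H.edgeSet × Fin b, f p = i ∧ (p.1 : Sym2 V) = e) ∧
            ∀ v ∈ e, v ∈ s}).ncard ≤ s.ncard) := by
  classical
  set k := ⌈(b : ℚ) * d⌉₊ with hk
  haveI : Fintype H.edgeSet := Fintype.ofFinite _
  have hbd : ((b : ℚ)) * d ≤ (k : ℚ) := Nat.le_ceil _
  have hbk : b ≤ k := by
    have h1 : (b : ℚ) ≤ (b : ℚ) * d := le_mul_of_one_le_right (by positivity) hd1
    exact_mod_cast h1.trans hbd
  -- the Hall system
  set endF : Sym2 V → Finset V := fun e => Finset.univ.filter (· ∈ e) with hendF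
  have hmemendF : ∀ (u : V) (e : Sym2 V), u ∈ endF e ↔ u ∈ e := by
    intro u e; simp [hendF]
  set t : H.edgeSet × Fin b → Finset (V × Fin k) :=
    fun p => (endF (p.1 : Sym2 V)) ×ˢ Finset.univ with htdef
  have hall : ∀ F : Finset (H.edgeSet × Fin b), F.card ≤ (F.biUnion t).card := by
    intro F
    rcases F.eq_empty_or_nonempty with rfl | hF
    · simp
    set sF : Finset V := F.biUnion (fun p => endF (p.1 : Sym2 V)) with hsF
    have hsFne : sF.Nonempty := by
      obtain ⟨p, hp⟩ := hF
      refine ⟨(p.1 : Sym2 V).out.1, ?_⟩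
      rw [hsF, Finset.mem_biUnion]
      exact ⟨p, hp, (hmemendF _ _).2 (Sym2.out_fst_mem _)⟩
    have hbU : F.biUnion t = sF ×ˢ Finset.univ := by
      ext q
      simp only [Finset.mem_biUnion, htdef, Finset.mem_product, hsF, Finset.mem_univ,
        and_true]
    have hbUcard : (F.biUnion t).card = sF.card * k := by
      rw [hbU, Finset.card_product, Finset.card_univ, Fintype.card_fin]
    set eF : Finset H.edgeSet := F.image Prod.fst with heF
    have hFle : F.card ≤ eF.card * b := by
      calc F.card ≤ (eF ×ˢ (Finset.univ : Finset (Fin b))).card := by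
            apply Finset.card_le_card
            intro p hp
            rw [Finset.mem_product]
            exact ⟨Finset.mem_image_of_mem _ hp, Finset.mem_univ _⟩
        _ = eF.card * b := by rw [Finset.card_product, Finset.card_univ, Fintype.card_fin]
    have heFle : eF.card ≤ edgeCountIn H ↑sF := by
      have himg : ((eF.image (Subtype.val)) : Set (Sym2 V)) ⊆
          {e ∈ H.edgeSet | ∀ v ∈ e, v ∈ (↑sF : Set V)} := by
        intro e he
        simp only [Finset.coe_image, Set.mem_image, Finset.mem_coe] at he
        obtain ⟨e', he', rfl⟩ := he
        rw [heF, Finset.mem_image] at he'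
        obtain ⟨p, hp, rfl⟩ := he'
        refine ⟨(p.1).2, ?_⟩
        intro v hv
        rw [Finset.mem_coe, hsF, Finset.mem_biUnion]
        exact ⟨p, hp, (hmemendF _ _).2 hv⟩
      calc eF.card = (eF.image Subtype.val).card :=
            (Finset.card_image_of_injective _ Subtype.val_injective).symm
        _ = ((eF.image Subtype.val : Finset (Sym2 V)) : Set (Sym2 V)).ncard :=
            (Set.ncard_coe_finset _).symm
        _ ≤ edgeCountIn H ↑sF := Set.ncard_le_ncard himg (Set.toFinite _)
    have hQ : (F.card : ℚ) ≤ (sF.card : ℚ) * k := by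
      have h1 : (F.card : ℚ) ≤ (b : ℚ) * (edgeCountIn H ↑sF : ℚ) := by
        have := hFle.trans (Nat.mul_le_mul_right b heFle)
        calc (F.card : ℚ) ≤ ((edgeCountIn H ↑sF * b : ℕ) : ℚ) := by exact_mod_cast this
          _ = (b : ℚ) * (edgeCountIn H ↑sF : ℚ) := by push_cast; ring
      have h2 : (edgeCountIn H ↑sF : ℚ) ≤ d * (↑sF : Set V).ncard := by
        apply hub
        obtain ⟨v, hv⟩ := hsFne
        exact ⟨v, hv⟩
      have h3 : ((↑sF : Set V).ncard : ℚ) = (sF.card : ℚ) := by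
        rw [Set.ncard_coe_finset]
      calc (F.card : ℚ) ≤ (b : ℚ) * (d * (↑sF : Set V).ncard) := by
            refine h1.trans ?_
            apply mul_le_mul_of_nonneg_left h2 (by positivity)
        _ = ((b : ℚ) * d) * (sF.card : ℚ) := by rw [h3]; ring
        _ ≤ (k : ℚ) * (sF.card : ℚ) := by
            apply mul_le_mul_of_nonneg_right hbd (by positivity)
        _ = (sF.card : ℚ) * k := by ring
    rw [hbUcard]
    exact_mod_cast hQ
  obtain ⟨g, hginj, hgmem⟩ := (Finset.all_card_le_biUnion_card_iff_exists_injective t).1 hall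
  set o : H.edgeSet × Fin b → V := fun p => (g p).1 with ho
  have hoin : ∀ p, o p ∈ (p.1 : Sym2 V) := by
    intro p
    have := hgmem p
    rw [htdef, Finset.mem_product] at this
    exact (hmemendF _ _).1 this.1
  have hrfib : ∀ v : V, (Finset.univ.filter fun p => o p = v).card ≤ k := by
    intro v
    have h := Finset.card_le_card_of_injOn (fun p => (g p).2)
      (s := Finset.univ.filter fun p => o p = v) (t := (Finset.univ : Finset (Fin k)))
      (fun p _ => Finset.mem_univ _) ?_
    · simpa using h
    · intro p hp q hq hpq
      simp only [Finset.coe_filter, Set.mem_setOf_eq] at hp hq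
      apply hginj
      exact Prod.ext (hp.2.trans hq.2.symm) hpq
  have hlfib : ∀ e : H.edgeSet,
      (Finset.univ.filter fun p : H.edgeSet × Fin b => p.1 = e).card ≤ k := by
    intro e
    have : (Finset.univ.filter fun p : H.edgeSet × Fin b => p.1 = e)
        = {e} ×ˢ Finset.univ := by
      ext p
      simp only [Finset.mem_filter, Finset.mem_univ, true_and, Finset.mem_product,
        Finset.mem_singleton, and_true]
    rw [this, Finset.card_product, Finset.card_singleton, Finset.card_univ,
      Fintype.card_fin, one_mul]
    exact hbk
  obtain ⟨fN, hflt, hfl, hfr⟩ := konig_sub (fun p : H.edgeSet × Fin b => p.1) o k hlfib hrfib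
  refine ⟨fun p => ⟨fN p, hflt p⟩, ?_, ?_⟩
  · intro e c c' hcc
    have h1 : fN (e, c) = fN (e, c') := by
      have := congrArg Fin.val hcc
      simpa using this
    have := hfl (e, c) (e, c') rfl h1
    simpa using this
  · intro i s hs
    set S := {e : Sym2 V | (∃ p : H.edgeSet × Fin b, (⟨fN p, hflt p⟩ : Fin k) = i ∧
        (p.1 : Sym2 V) = e) ∧ ∀ v ∈ e, v ∈ s} with hS
    by_cases hne : Nonempty (H.edgeSet × Fin b)
    · have hex : ∀ e ∈ S, ∃ p : H.edgeSet × Fin b,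
          (⟨fN p, hflt p⟩ : Fin k) = i ∧ (p.1 : Sym2 V) = e := fun e he => he.1
      choose! φ hφ1 hφ2 using hex
      refine Set.ncard_le_ncard_of_injOn (fun e => o (φ e)) ?_ ?_ (Set.toFinite s)
      · intro e he
        have h3 : o (φ e) ∈ (↑(φ e).1 : Sym2 V) := hoin (φ e)
        rw [hφ2 e he] at h3
        exact he.2 _ h3
      · intro e he e' he' hoe
        have hface : fN (φ e) = fN (φ e') := by
          have := (hφ1 e he).trans (hφ1 e' he').symm
          exact congrArg Fin.val this
        have := hfr (φ e) (φ e') hoe hface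
        rw [← hφ2 e he, ← hφ2 e' he', this]
    · have hSempty : S = ∅ := by
        rw [Set.eq_empty_iff_forall_notMem]
        rintro e ⟨⟨p, -⟩, -⟩
        exact hne ⟨p⟩
      rw [hSempty, Set.ncard_empty]
      exact Nat.zero_le _
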